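/- arXiv:2603.21221 — 2 statements merged into one kernel-verified Lean document; each statement's English description precedes it below -/
import Mathlib

section
/- Conjugation of partitions (transposing the Ferrers diagram) defines an involutive graph automorphism of G_n: λ and μ are adjacent in G_n if and only if their conjugates λ' and μ' are adjacent. -/
/-- Elementary one-cell transfer: move one cell from a part `a` of `l` to another
part `b` (or to a new part, encoded by `b = 0`), discarding zero parts. -/
def PartitionTransfer {n : ℕ} (l m : n.Partition) : Prop :=
  ∃ a ∈ l.parts, ∃ b, (b ∈ l.parts.erase a ∨ b = 0) ∧
    m.parts = Multiset.filter (· ≠ 0) ((l.parts.erase a).erase b + {a - 1, b + 1})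

/-- The partition graph `G_n`: partitions of `n`, adjacent iff one is obtained from
the other by an elementary one-cell transfer producing a different partition. -/
def partitionGraph (n : ℕ) : SimpleGraph (Nat.Partition n) where
  Adj l m := l ≠ m ∧ (PartitionTransfer l m ∨ PartitionTransfer m l)
  symm := ⟨fun _ _ h => ⟨h.1.symm, h.2.symm⟩⟩
  loopless := ⟨fun _ h => h.1 rfl⟩

/-- The hook partition `(n-k, 1^k)`. -/
def hookPartition (n k : ℕ) (h : k + 1 ≤ n) : n.Partition :=
  ⟨Multiset.replicate k 1 + {n - k}, by
    intro i hi
    simp [Multiset.mem_replicate] at hi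
    rcases hi with ⟨-, rfl⟩ | rfl
    · norm_num
    · omega, by
    simp [Multiset.sum_replicate]
    omega⟩

/-- The partition `(1^n)`. -/
def onesPartition (n : ℕ) : n.Partition :=
  ⟨Multiset.replicate n 1, by
    intro i hi
    rw [Multiset.mem_replicate] at hi
    omega, by simp [Multiset.sum_replicate]⟩

/-- The two-part partition `(n-k, k)`. -/
def twoPartPartition (n k : ℕ) (h1 : 1 ≤ k) (h2 : 2 * k ≤ n) : n.Partition :=
  ⟨{n - k, k}, by
    intro i hi
    simp [Multiset.mem_cons] at hi
    rcases hi with rfl | rfl <;> omega, by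
    simp
    omega⟩

/-- The multiset of column lengths of the Ferrers diagram with row lengths `s`. -/
def conjParts (s : Multiset ℕ) : Multiset ℕ :=
  (Multiset.range s.sup).map fun j => (s.filter fun a => j < a).card

private theorem conjParts_aux_inner (a N : ℕ) (ha : a ≤ N) :
    (∑ j ∈ Finset.range N, if a > j then 1 else 0) = a := by
  rw [Finset.sum_boole]
  have : (Finset.range N).filter (fun j => a > j) = Finset.range a := by
    ext j; simp; omega
  rw [this]; simp

private theorem conjParts_aux (s : Multiset ℕ) (N : ℕ) (hs : ∀ a ∈ s, a ≤ N) :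
    (∑ j ∈ Finset.range N, Multiset.countP (fun a => j < a) s) = s.sum := by
  induction s using Multiset.induction with
  | empty => simp
  | cons a s ih =>
    have ha : a ≤ N := hs a (Multiset.mem_cons_self a s)
    have ih' := ih fun b hb => hs b (Multiset.mem_cons_of_mem hb)
    simp only [Multiset.countP_cons, Finset.sum_add_distrib, ih', Multiset.sum_cons]
    rw [conjParts_aux_inner a N ha]
    omega

theorem conjParts_sum (s : Multiset ℕ) : (conjParts s).sum = s.sum := by
  have h1 : (conjParts s).sum
      = ∑ j ∈ Finset.range s.sup, Multiset.countP (fun a => j < a) s := by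
    simp [conjParts, Multiset.countP_eq_card_filter]
    rfl
  rw [h1, conjParts_aux]
  intro a ha
  exact Multiset.le_sup ha

/-- The conjugate partition: transpose of the Ferrers diagram, so that the `j`-th
part of the conjugate is `#{i : l_i ≥ j}`. -/
def conjPartition {n : ℕ} (l : n.Partition) : n.Partition :=
  ⟨conjParts l.parts, by
    intro i hi
    simp only [conjParts, Multiset.mem_map, Multiset.mem_range] at hi
    obtain ⟨j, hj, rfl⟩ := hi
    rw [Multiset.card_pos]
    intro h
    have : l.parts.sup ≤ j := by
      rw [Multiset.sup_le]
      intro b hb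
      by_contra hbj
      have : b ∈ Multiset.filter (fun a => j < a) l.parts :=
        Multiset.mem_filter.2 ⟨hb, by omega⟩
      simp [h] at this
    omega, by rw [conjParts_sum, l.parts_sum]⟩

/-- The staircase partition `(t, t-1, ..., 2, 1)` of `t*(t+1)/2`. -/
def staircasePartition (t : ℕ) : (t * (t + 1) / 2).Partition :=
  ⟨(Multiset.range t).map (· + 1), by
    intro i hi
    simp [Multiset.mem_map] at hi
    omega, by
    have h : ((Multiset.range t).map (· + 1)).sum = ∑ i ∈ Finset.range (t + 1), i := by
      rw [Finset.sum_range_succ']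
      rfl
    rw [h, Finset.sum_range_id]
    simp [Nat.mul_comm]⟩


private def gfun (s : Multiset ℕ) (j : ℕ) : ℕ := Multiset.countP (fun x => j < x) s

private theorem gfun_zero_of_sup_le {s : Multiset ℕ} {j : ℕ} (h : s.sup ≤ j) : gfun s j = 0 := by
  rw [gfun, Multiset.countP_eq_zero]
  intro x hx
  have := Multiset.le_sup hx
  omega

private theorem gfun_anti (s : Multiset ℕ) {i j : ℕ} (h : i ≤ j) : gfun s j ≤ gfun s i := by
  induction s using Multiset.induction with
  | empty => simp [gfun]
  | cons a t ih =>
    simp only [gfun, Multiset.countP_cons] at *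
    have : (if j < a then 1 else 0) ≤ (if i < a then (1:ℕ) else 0) := by
      split_ifs <;> omega
    omega

private theorem gfun_pos_iff {s : Multiset ℕ} {j : ℕ} : 0 < gfun s j ↔ ∃ a ∈ s, j < a :=
  Multiset.countP_pos

private theorem lt_sup_of_gfun_pos {s : Multiset ℕ} {j : ℕ} (h : 0 < gfun s j) : j < s.sup := by
  obtain ⟨a, ha, hja⟩ := gfun_pos_iff.1 h
  have := Multiset.le_sup ha
  omega

private theorem countP_range_extend (p : ℕ → Prop) [DecidablePred p] {S N : ℕ} (hSN : S ≤ N)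
    (h : ∀ j, p j → j < S) :
    Multiset.countP p (Multiset.range N) = Multiset.countP p (Multiset.range S) := by
  induction N, hSN using Nat.le_induction with
  | base => rfl
  | succ N hSN ih =>
    rw [Multiset.range_succ, Multiset.countP_cons, ih,
      if_neg (fun hN => absurd (h N hN) (by omega)), Nat.add_zero]

private theorem countP_range_lt {t N : ℕ} (h : t ≤ N) :
    Multiset.countP (fun j => j < t) (Multiset.range N) = t := by
  rw [countP_range_extend (fun j => j < t) h (fun j hj => hj),
    Multiset.countP_eq_card.2 (fun a ha => Multiset.mem_range.1 ha), Multiset.card_range]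

private theorem conjParts_eq_map (s : Multiset ℕ) :
    conjParts s = (Multiset.range s.sup).map (gfun s) := by
  simp [conjParts, gfun, Multiset.countP_eq_card_filter]
  congr 1
  funext j
  simp [gfun, Multiset.countP_eq_card_filter]

private theorem gfun_conj (s : Multiset ℕ) {N : ℕ} (hN : s.sup ≤ N) (w : ℕ) :
    gfun (conjParts s) w = Multiset.countP (fun j => w < gfun s j) (Multiset.range N) := by
  rw [conjParts_eq_map, gfun, Multiset.countP_map, ← Multiset.countP_eq_card_filter,
    countP_range_extend _ hN]
  intro j hj
  by_contra hns
  rw [gfun_zero_of_sup_le (by omega)] at hj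
  omega

private theorem gfun_succ (s : Multiset ℕ) {v : ℕ} (hv : 1 ≤ v) :
    gfun s (v - 1) = Multiset.count v s + gfun s v := by
  induction s using Multiset.induction with
  | empty => simp [gfun]
  | cons a t ih =>
    simp only [gfun, Multiset.countP_cons, Multiset.count_cons] at *
    have : (if v - 1 < a then (1:ℕ) else 0) =
        (if v = a then 1 else 0) + (if v < a then 1 else 0) := by
      split_ifs <;> omega
    omega

private theorem eq_of_gfun_eq {s t : Multiset ℕ} (hs : ∀ x ∈ s, 0 < x) (ht : ∀ x ∈ t, 0 < x)
    (h : ∀ j, gfun s j = gfun t j) : s = t := by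
  ext v
  rcases Nat.eq_zero_or_pos v with rfl | hv
  · rw [Multiset.count_eq_zero.2 (fun h0 => absurd (hs 0 h0) (lt_irrefl 0)),
      Multiset.count_eq_zero.2 (fun h0 => absurd (ht 0 h0) (lt_irrefl 0))]
  · have h1 := gfun_succ s hv
    have h2 := gfun_succ t hv
    rw [h (v-1), h v] at h1
    omega

private theorem conjParts_pos {s : Multiset ℕ} {x : ℕ} (hx : x ∈ conjParts s) : 0 < x := by
  rw [conjParts_eq_map] at hx
  obtain ⟨j, hj, rfl⟩ := Multiset.mem_map.1 hx
  rw [Multiset.mem_range] at hj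
  simp only [gfun]
  rw [Multiset.countP_pos]
  by_contra h
  push_neg at h
  have : s.sup ≤ j := Multiset.sup_le.2 (fun b hb => by have := h b hb; omega)
  omega

private theorem key_iff (s : Multiset ℕ) {M : ℕ} (hM : s.sup ≤ M) (w j : ℕ) :
    w < Multiset.countP (fun k => j < gfun s k) (Multiset.range M) ↔ j < gfun s w := by
  constructor
  · intro h
    by_contra hj
    rw [not_lt] at hj
    have hsub : Multiset.filter (fun k => j < gfun s k) (Multiset.range M) ⊆ Multiset.range w := by
      intro k hk
      rw [Multiset.mem_filter] at hk
      rw [Multiset.mem_range]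
      by_contra hkw
      have := gfun_anti s (show w ≤ k by omega)
      omega
    have hle : Multiset.filter (fun k => j < gfun s k) (Multiset.range M) ≤ Multiset.range w :=
      (Multiset.le_iff_subset ((Multiset.nodup_range M).filter _)).2 hsub
    have := Multiset.card_le_card hle
    rw [Multiset.card_range, ← Multiset.countP_eq_card_filter] at this
    omega
  · intro h
    have hwM : w < M := by
      have : w < s.sup := lt_sup_of_gfun_pos (by omega)
      omega
    have hsub : Multiset.range (w+1) ⊆
        Multiset.filter (fun k => j < gfun s k) (Multiset.range M) := by
      intro k hk
      rw [Multiset.mem_range] at hk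
      rw [Multiset.mem_filter, Multiset.mem_range]
      have := gfun_anti s (show k ≤ w by omega)
      exact ⟨by omega, by omega⟩
    have hle := (Multiset.le_iff_subset (Multiset.nodup_range (w+1))).2 hsub
    have := Multiset.card_le_card hle
    rw [Multiset.card_range, ← Multiset.countP_eq_card_filter] at this
    omega

private theorem conjParts_conjParts {s : Multiset ℕ} (hs : ∀ x ∈ s, 0 < x) :
    conjParts (conjParts s) = s := by
  refine eq_of_gfun_eq (fun x hx => conjParts_pos hx) hs ?_
  intro w
  have hcong : ∀ j, (w < gfun (conjParts s) j) ↔ (j < gfun s w) := fun j => by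
    rw [gfun_conj s (le_refl _) j]
    exact key_iff s (le_refl _) w j
  rw [gfun_conj (conjParts s) (le_sup_left : (conjParts s).sup ≤ (conjParts s).sup ⊔ gfun s w) w,
    Multiset.countP_congr rfl (fun x _ => propext (hcong x)),
    countP_range_lt (le_sup_right : gfun s w ≤ (conjParts s).sup ⊔ gfun s w)]

private theorem nodup_ne_of_mem_erase {t : Multiset ℕ} (h : t.Nodup) {x y : ℕ}
    (hx : x ∈ t.erase y) : x ≠ y := by
  intro he
  subst he
  have h1 := Multiset.count_erase_self x t
  have h2 := (Multiset.nodup_iff_count_le_one.1 h) x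
  have h3 := Multiset.count_pos.2 hx
  omega

private theorem countP_pair (p : ℕ → Prop) [DecidablePred p] (x y : ℕ) :
    Multiset.countP p ({x, y} : Multiset ℕ) = (if p x then 1 else 0) + (if p y then 1 else 0) := by
  show Multiset.countP p (x ::ₘ y ::ₘ 0) = _
  rw [Multiset.countP_cons, Multiset.countP_cons, Multiset.countP_zero]
  omega

private theorem transfer_conj {n : ℕ} (l m : n.Partition) (hne : l ≠ m)
    (h : PartitionTransfer l m) : PartitionTransfer (conjPartition l) (conjPartition m) := by
  obtain ⟨a, ha, b, hb, hm⟩ := h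
  have hpos : ∀ x ∈ l.parts, 0 < x := fun x hx => l.parts_pos hx
  have ha1 : 1 ≤ a := hpos a ha
  have h0l : (0:ℕ) ∉ l.parts := fun h0 => absurd (hpos 0 h0) (lt_irrefl 0)
  -- a ≠ b + 1, else m = l
  have hab : a ≠ b + 1 := by
    intro hE
    refine hne (Nat.Partition.ext ?_).symm
    rw [hm]
    have hb1 : b + 1 = a := hE.symm
    rcases hb with hbmem | rfl
    · have e2 : l.parts.erase a = b ::ₘ (l.parts.erase a).erase b :=
        (Multiset.cons_erase hbmem).symm
      have e1 : l.parts = a ::ₘ l.parts.erase a := (Multiset.cons_erase ha).symm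
      have hbpos : 0 < b := hpos b (Multiset.mem_of_mem_erase hbmem)
      rw [Multiset.filter_eq_self.2 ?_]
      · have : ({a - 1, b + 1} : Multiset ℕ) = {b, a} := by
          rw [hb1]
          congr 1
          omega
        rw [this]
        have : (l.parts.erase a).erase b + ({b, a} : Multiset ℕ)
            = a ::ₘ (b ::ₘ (l.parts.erase a).erase b) := by
          rw [add_comm]
          simp only [Multiset.insert_eq_cons, Multiset.cons_add, Multiset.singleton_add]
          rw [Multiset.cons_swap]
        rw [this, ← e2, ← e1]
      · intro x hx
        rw [Multiset.mem_add] at hx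
        rcases hx with hx | hx
        · have := hpos x (Multiset.mem_of_mem_erase (Multiset.mem_of_mem_erase hx))
          omega
        · simp only [Multiset.insert_eq_cons, Multiset.mem_cons, Multiset.mem_singleton] at hx
          rcases hx with rfl | rfl <;> omega
    · have ha1' : a = 1 := by omega
      have e0 : (l.parts.erase a).erase 0 = l.parts.erase a :=
        Multiset.erase_of_notMem (fun h0 => h0l (Multiset.mem_of_mem_erase h0))
      rw [e0, Multiset.filter_add]
      have h1 : Multiset.filter (· ≠ 0) (l.parts.erase a) = l.parts.erase a :=
        Multiset.filter_eq_self.2 (fun x hx => by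
          have := hpos x (Multiset.mem_of_mem_erase hx); omega)
      have h2 : Multiset.filter (· ≠ 0) ({a - 1, 0 + 1} : Multiset ℕ) = {a} := by
        rw [ha1']
        decide
      rw [h1, h2, add_comm, Multiset.singleton_add, Multiset.cons_erase ha]
  have hbne : a - 1 ≠ b := by omega
  -- pointwise relation between gfun m.parts and gfun l.parts
  have hUrel : ∀ j, gfun m.parts j + ((if j < a then 1 else 0) + (if j < b then 1 else 0)) =
      gfun l.parts j + ((if j < a - 1 then 1 else 0) + (if j < b + 1 then 1 else 0)) := by
    intro j
    have hmj : gfun m.parts j = gfun ((l.parts.erase a).erase b) j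
        + ((if j < a - 1 then 1 else 0) + (if j < b + 1 then 1 else 0)) := by
      rw [hm]
      simp only [gfun]
      have hstep : Multiset.countP (fun x => j < x ∧ x ≠ 0)
            ((l.parts.erase a).erase b + ({a - 1, b + 1} : Multiset ℕ))
          = Multiset.countP (fun x => j < x)
            ((l.parts.erase a).erase b + ({a - 1, b + 1} : Multiset ℕ)) :=
        Multiset.countP_congr rfl (fun x _ => propext ⟨fun h => h.1, fun h => ⟨h, by omega⟩⟩)
      rw [Multiset.countP_filter, hstep, Multiset.countP_add, countP_pair]
    have hl1 : gfun l.parts j = gfun (l.parts.erase a) j + (if j < a then 1 else 0) := by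
      conv_lhs => rw [← Multiset.cons_erase ha]
      simp [gfun, Multiset.countP_cons]
    have hl2 : gfun (l.parts.erase a) j
        = gfun ((l.parts.erase a).erase b) j + (if j < b then 1 else 0) := by
      rcases hb with hbmem | rfl
      · conv_lhs => rw [← Multiset.cons_erase hbmem]
        simp [gfun, Multiset.countP_cons]
      · rw [Multiset.erase_of_notMem (fun h0 => h0l (Multiset.mem_of_mem_erase h0))]
        simp
    omega
  set c := gfun l.parts (a - 1) with hcdef
  set d := gfun l.parts b with hddef
  have hgm_eq : ∀ j, j ≠ a - 1 → j ≠ b → gfun m.parts j = gfun l.parts j := by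
    intro j h1 h2
    have := hUrel j
    split_ifs at this <;> omega
  have hgm_a : gfun m.parts (a - 1) = c - 1 := by
    have h1 := hUrel (a - 1)
    have hc1 : 1 ≤ c := gfun_pos_iff.2 ⟨a, ha, by omega⟩
    rw [← hcdef] at h1
    split_ifs at h1 <;> omega
  have hgm_b : gfun m.parts b = d + 1 := by
    have h1 := hUrel b
    rw [← hddef] at h1
    split_ifs at h1 <;> omega
  have hc1 : 1 ≤ c := gfun_pos_iff.2 ⟨a, ha, by omega⟩
  have hasup : a - 1 < l.parts.sup := by
    have := Multiset.le_sup ha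
    omega
  have hcmem : c ∈ conjParts l.parts := by
    rw [conjParts_eq_map]
    exact Multiset.mem_map.2 ⟨a - 1, Multiset.mem_range.2 hasup, rfl⟩
  have hd : d ∈ (conjParts l.parts).erase c ∨ d = 0 := by
    rcases Nat.eq_zero_or_pos d with hd0 | hdpos
    · exact Or.inr hd0
    · left
      have hbsup : b < l.parts.sup := lt_sup_of_gfun_pos hdpos
      have hdmem : d ∈ conjParts l.parts := by
        rw [conjParts_eq_map]
        exact Multiset.mem_map.2 ⟨b, Multiset.mem_range.2 hbsup, rfl⟩
      by_cases hcd : c = d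
      · -- two distinct columns with the same height
        have hcount : 2 ≤ Multiset.count c (conjParts l.parts) := by
          rw [conjParts_eq_map, Multiset.count_map]
          have hsub : ({a - 1, b} : Multiset ℕ) ⊆
              Multiset.filter (fun j => c = gfun l.parts j) (Multiset.range l.parts.sup) := by
            intro x hx
            simp only [Multiset.insert_eq_cons, Multiset.mem_cons, Multiset.mem_singleton] at hx
            rcases hx with rfl | rfl
            · exact Multiset.mem_filter.2 ⟨Multiset.mem_range.2 hasup, hcdef⟩
            · exact Multiset.mem_filter.2 ⟨Multiset.mem_range.2 hbsup, by rw [hcd, hddef]⟩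
          have hnd : ({a - 1, b} : Multiset ℕ).Nodup := by
            simp [hbne]
          have := Multiset.card_le_card ((Multiset.le_iff_subset hnd).2 hsub)
          simpa using this
        rw [← Multiset.count_pos, ← hcd, Multiset.count_erase_self]
        omega
      · exact (Multiset.mem_erase_of_ne (fun h => hcd h.symm)).2 hdmem
  refine ⟨c, hcmem, d, hd, ?_⟩
  show conjParts m.parts = Multiset.filter (· ≠ 0)
    (((conjParts l.parts).erase c).erase d + ({c - 1, d + 1} : Multiset ℕ))
  refine eq_of_gfun_eq (fun x hx => conjParts_pos hx)
    (fun x hx => Nat.pos_of_ne_zero ((Multiset.mem_filter.1 hx).2)) ?_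
  intro w
  set N := l.parts.sup + m.parts.sup + 1 with hNdef
  have hsupl : l.parts.sup ≤ N := by omega
  have hsupm : m.parts.sup ≤ N := by omega
  have haN : a - 1 < N := by omega
  have hbN : b < N := by
    rcases hb with hbmem | rfl
    · have := Multiset.le_sup (Multiset.mem_of_mem_erase hbmem)
      omega
    · omega
  set R := ((Multiset.range N).erase (a - 1)).erase b with hRdef
  have hbmemR : b ∈ (Multiset.range N).erase (a - 1) :=
    (Multiset.mem_erase_of_ne (fun h => hbne h.symm)).2 (Multiset.mem_range.2 hbN)
  have hR2 : (Multiset.range N).erase (a - 1) = b ::ₘ R := (Multiset.cons_erase hbmemR).symm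
  have hR1 : Multiset.range N = (a - 1) ::ₘ ((Multiset.range N).erase (a - 1)) :=
    (Multiset.cons_erase (Multiset.mem_range.2 haN)).symm
  have hxR : ∀ x ∈ R, x ≠ a - 1 ∧ x ≠ b := by
    intro x hx
    have hnd : ((Multiset.range N).erase (a - 1)).Nodup :=
      (Multiset.nodup_range N).erase _
    refine ⟨?_, nodup_ne_of_mem_erase hnd hx⟩
    have hx' : x ∈ (Multiset.range N).erase (a - 1) := Multiset.mem_of_mem_erase hx
    exact nodup_ne_of_mem_erase (Multiset.nodup_range N) hx'
  -- decompose LHS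
  have hLHS : gfun (conjParts m.parts) w =
      Multiset.countP (fun j => w < gfun m.parts j) R
        + ((if w < c - 1 then 1 else 0) + (if w < d + 1 then 1 else 0)) := by
    rw [gfun_conj m.parts hsupm w, hR1, Multiset.countP_cons, hR2, Multiset.countP_cons,
      hgm_a, hgm_b]
    omega
  have hconjl : gfun (conjParts l.parts) w =
      Multiset.countP (fun j => w < gfun l.parts j) R
        + ((if w < c then 1 else 0) + (if w < d then 1 else 0)) := by
    rw [gfun_conj l.parts hsupl w, hR1, Multiset.countP_cons, hR2, Multiset.countP_cons,
      ← hcdef, ← hddef]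
    omega
  have hPM : Multiset.countP (fun j => w < gfun m.parts j) R
      = Multiset.countP (fun j => w < gfun l.parts j) R := by
    refine Multiset.countP_congr rfl (fun x hx => ?_)
    rw [hgm_eq x (hxR x hx).1 (hxR x hx).2]
  set T := ((conjParts l.parts).erase c).erase d with hTdef
  have hT : gfun (conjParts l.parts) w
      = gfun T w + ((if w < c then 1 else 0) + (if w < d then 1 else 0)) := by
    rcases hd with hdmem | hd0
    · have e1 : conjParts l.parts = c ::ₘ (d ::ₘ T) := by
        rw [hTdef, Multiset.cons_erase hdmem, Multiset.cons_erase hcmem]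
      rw [e1]
      simp only [gfun, Multiset.countP_cons]
      omega
    · have h0c : (0:ℕ) ∉ (conjParts l.parts).erase c := fun h0 =>
        absurd (conjParts_pos (Multiset.mem_of_mem_erase h0)) (lt_irrefl 0)
      have hTe : T = (conjParts l.parts).erase c := by
        rw [hTdef, hd0]
        exact Multiset.erase_of_notMem h0c
      have e1 : conjParts l.parts = c ::ₘ (conjParts l.parts).erase c :=
        (Multiset.cons_erase hcmem).symm
      rw [hTe]
      conv_lhs => rw [e1]
      simp only [gfun, Multiset.countP_cons]
      rw [hd0]
      simp
  have hRHS : gfun (Multiset.filter (· ≠ 0) (T + ({c - 1, d + 1} : Multiset ℕ))) w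
      = gfun T w + ((if w < c - 1 then 1 else 0) + (if w < d + 1 then 1 else 0)) := by
    simp only [gfun]
    have hstep : Multiset.countP (fun x => w < x ∧ x ≠ 0)
          (T + ({c - 1, d + 1} : Multiset ℕ))
        = Multiset.countP (fun x => w < x) (T + ({c - 1, d + 1} : Multiset ℕ)) :=
      Multiset.countP_congr rfl (fun x _ => propext ⟨fun h => h.1, fun h => ⟨h, by omega⟩⟩)
    rw [Multiset.countP_filter, hstep, Multiset.countP_add, countP_pair]
  rw [hLHS, hRHS]
  omega

/-- Conjugation of partitions is an involutive graph automorphism of `G_n`: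
it is an involution, and `λ`, `μ` are adjacent iff `λ'`, `μ'` are adjacent. -/
theorem conj_automorphism (n : ℕ) :
    (∀ l : n.Partition, conjPartition (conjPartition l) = l) ∧
    (∀ l m : n.Partition,
      (partitionGraph n).Adj l m ↔ (partitionGraph n).Adj (conjPartition l) (conjPartition m)) := by
  have hinv : ∀ l : n.Partition, conjPartition (conjPartition l) = l := fun l =>
    Nat.Partition.ext (conjParts_conjParts (fun x hx => l.parts_pos hx))
  have hinj : ∀ x y : n.Partition, conjPartition x = conjPartition y → x = y := by
    intro x y h
    rw [← hinv x, ← hinv y, h]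
  refine ⟨hinv, fun l m => ⟨?_, ?_⟩⟩
  · show _ ∧ _ → _
    rintro ⟨hne, ht⟩
    refine ⟨fun h => hne (hinj l m h), ?_⟩
    rcases ht with h | h
    · exact Or.inl (transfer_conj l m hne h)
    · exact Or.inr (transfer_conj m l (Ne.symm hne) h)
  · show _ ∧ _ → _
    rintro ⟨hne, ht⟩
    have hne' : l ≠ m := fun h => hne (by rw [h])
    refine ⟨hne', ?_⟩
    rcases ht with h | h
    · have h2 := transfer_conj _ _ hne h
      rw [hinv, hinv] at h2
      exact Or.inl h2
    · have h2 := transfer_conj _ _ (Ne.symm hne) h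
      rw [hinv, hinv] at h2
      exact Or.inr h2
end

section
/- Let λ = (r^m) be a rectangular partition with r ≥ 2 and m ≥ 2 and n = rm. Then λ has exactly two neighbors in G_n, namely (r+1, r^{m-2}, r-1) and (r^{m-1}, r-1, 1), and these two neighbors are adjacent to each other, so λ lies in a triangle of G_n. -/
private lemma filter_pair_pos (t : Multiset ℕ) (h : ∀ c ∈ t, c ≠ 0) (u v : ℕ)
    (hu : u ≠ 0) (hv : v ≠ 0) :
    Multiset.filter (· ≠ 0) (t + {u, v}) = t + {u, v} := by
  rw [Multiset.filter_eq_self]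
  intro c hc
  rw [Multiset.mem_add] at hc
  rcases hc with hc | hc
  · exact h c hc
  · simp only [Multiset.insert_eq_cons, Multiset.mem_cons, Multiset.mem_singleton] at hc
    rcases hc with rfl | rfl <;> assumption

private lemma filter_pair_zero (t : Multiset ℕ) (h : ∀ c ∈ t, c ≠ 0) (v : ℕ)
    (hv : v ≠ 0) :
    Multiset.filter (· ≠ 0) (t + {0, v}) = t + {v} := by
  rw [Multiset.insert_eq_cons, Multiset.filter_add, Multiset.filter_eq_self.2 h,
    Multiset.filter_cons_of_neg _ (by simp), Multiset.filter_singleton, if_pos hv]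

private lemma transfer_from_rect {n : ℕ} (s k : ℕ) (lam x : n.Partition)
    (hl : lam.parts = Multiset.replicate (k + 2) (s + 2))
    (ht : PartitionTransfer lam x) :
    x.parts = {s + 3} + Multiset.replicate k (s + 2) + {s + 1}
      ∨ x.parts = Multiset.replicate (k + 1) (s + 2) + {s + 1, 1} := by
  obtain ⟨a, ha, b, hb, hx⟩ := ht
  rw [hl] at ha hb hx
  obtain rfl : a = s + 2 := Multiset.eq_of_mem_replicate ha
  rw [Multiset.replicate_succ, Multiset.erase_cons_head] at hb hx
  simp only [show s + 2 - 1 = s + 1 from rfl, show s + 2 + 1 = s + 3 from rfl] at hx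
  rcases hb with hb | rfl
  · obtain rfl : b = s + 2 := Multiset.eq_of_mem_replicate hb
    rw [Multiset.replicate_succ, Multiset.erase_cons_head,
      filter_pair_pos (Multiset.replicate k (s + 2))
        (by intro c hc; rw [Multiset.eq_of_mem_replicate hc]; omega)
        (s + 1) (s + 2 + 1) (by omega) (by omega)] at hx
    left
    rw [hx]
    simp only [show s + 2 + 1 = s + 3 from rfl, Multiset.insert_eq_cons,
      ← Multiset.singleton_add]
    abel
  · rw [Multiset.erase_of_notMem (by simp [Multiset.mem_replicate]),
      filter_pair_pos (Multiset.replicate (k + 1) (s + 2))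
        (by intro c hc; rw [Multiset.eq_of_mem_replicate hc]; omega)
        (s + 1) (0 + 1) (by omega) (by omega)] at hx
    right
    rw [hx]

private lemma transfer_to_rect {n : ℕ} (s k : ℕ) (lam x : n.Partition)
    (hl : lam.parts = Multiset.replicate (k + 2) (s + 2))
    (ht : PartitionTransfer x lam) :
    x.parts = {s + 3} + Multiset.replicate k (s + 2) + {s + 1}
      ∨ x.parts = Multiset.replicate (k + 1) (s + 2) + {s + 1, 1} := by
  obtain ⟨a, ha, b, hb, hx⟩ := ht
  rw [hl] at hx
  have hpos : ∀ c ∈ (x.parts.erase a).erase b, c ≠ 0 := fun c hc =>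
    (x.parts_pos (Multiset.mem_of_mem_erase (Multiset.mem_of_mem_erase hc))).ne'
  have ha1 : 1 ≤ a := x.parts_pos ha
  rcases Nat.lt_or_ge a 2 with h2 | h2
  · obtain rfl : a = 1 := by omega
    simp only [show (1 : ℕ) - 1 = 0 from rfl] at hx
    rw [filter_pair_zero _ hpos (b + 1) (by omega)] at hx
    have hb2 : b + 1 = s + 2 := Multiset.eq_of_mem_replicate (by rw [hx]; simp)
    rcases hb with hb | hb
    swap
    · exfalso; omega
    obtain rfl : b = s + 1 := by omega
    simp only [show s + 1 + 1 = s + 2 from rfl] at hx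
    have hrep : Multiset.replicate (k + 2) (s + 2)
        = Multiset.replicate (k + 1) (s + 2) + {s + 2} := by
      rw [Multiset.replicate_succ, ← Multiset.singleton_add]
      exact add_comm _ _
    have hrest := add_right_cancel (hx.symm.trans hrep)
    right
    rw [← Multiset.cons_erase ha, ← Multiset.cons_erase hb, hrest]
    simp only [Multiset.insert_eq_cons, ← Multiset.singleton_add]
    abel
  · rw [filter_pair_pos _ hpos (a - 1) (b + 1) (by omega) (by omega)] at hx
    have ha2 : a - 1 = s + 2 := Multiset.eq_of_mem_replicate (by rw [hx]; simp)
    have hb2 : b + 1 = s + 2 := Multiset.eq_of_mem_replicate (by rw [hx]; simp)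
    rcases hb with hb | hb
    swap
    · exfalso; omega
    obtain rfl : a = s + 3 := by omega
    obtain rfl : b = s + 1 := by omega
    simp only [show s + 3 - 1 = s + 2 from rfl, show s + 1 + 1 = s + 2 from rfl] at hx
    have hrep : Multiset.replicate (k + 2) (s + 2)
        = Multiset.replicate k (s + 2) + {s + 2, s + 2} := by
      rw [Multiset.replicate_succ, Multiset.replicate_succ]
      simp only [Multiset.insert_eq_cons, ← Multiset.singleton_add]
      abel
    have hrest := add_right_cancel (hx.symm.trans hrep)
    left
    rw [← Multiset.cons_erase ha, ← Multiset.cons_erase hb, hrest]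
    simp only [Multiset.insert_eq_cons, ← Multiset.singleton_add]
    abel

private lemma rect_to_mu1 {n : ℕ} (s k : ℕ) (lam mu1 : n.Partition)
    (hl : lam.parts = Multiset.replicate (k + 2) (s + 2))
    (h1 : mu1.parts = {s + 3} + Multiset.replicate k (s + 2) + {s + 1}) :
    PartitionTransfer lam mu1 := by
  refine ⟨s + 2, ?_, s + 2, Or.inl ?_, ?_⟩
  · rw [hl]; exact Multiset.mem_replicate.2 ⟨by omega, rfl⟩
  · rw [hl, Multiset.replicate_succ, Multiset.erase_cons_head]
    exact Multiset.mem_replicate.2 ⟨by omega, rfl⟩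
  · rw [hl, Multiset.replicate_succ, Multiset.erase_cons_head,
      Multiset.replicate_succ, Multiset.erase_cons_head]
    simp only [show s + 2 - 1 = s + 1 from rfl, show s + 2 + 1 = s + 3 from rfl]
    rw [filter_pair_pos (Multiset.replicate k (s + 2))
        (by intro c hc; rw [Multiset.eq_of_mem_replicate hc]; omega)
        (s + 1) (s + 3) (by omega) (by omega), h1]
    simp only [Multiset.insert_eq_cons, ← Multiset.singleton_add]
    abel

private lemma rect_to_mu2 {n : ℕ} (s k : ℕ) (lam mu2 : n.Partition)
    (hl : lam.parts = Multiset.replicate (k + 2) (s + 2))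
    (h2 : mu2.parts = Multiset.replicate (k + 1) (s + 2) + {s + 1, 1}) :
    PartitionTransfer lam mu2 := by
  refine ⟨s + 2, ?_, 0, Or.inr rfl, ?_⟩
  · rw [hl]; exact Multiset.mem_replicate.2 ⟨by omega, rfl⟩
  · rw [hl, Multiset.replicate_succ, Multiset.erase_cons_head,
      Multiset.erase_of_notMem (by simp [Multiset.mem_replicate])]
    simp only [show s + 2 - 1 = s + 1 from rfl, show (0 : ℕ) + 1 = 1 from rfl]
    rw [filter_pair_pos (Multiset.replicate (k + 1) (s + 2))
        (by intro c hc; rw [Multiset.eq_of_mem_replicate hc]; omega)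
        (s + 1) 1 (by omega) (by omega), h2]

private lemma mu2_to_mu1 {n : ℕ} (s k : ℕ) (mu1 mu2 : n.Partition)
    (h1 : mu1.parts = {s + 3} + Multiset.replicate k (s + 2) + {s + 1})
    (h2 : mu2.parts = Multiset.replicate (k + 1) (s + 2) + {s + 1, 1}) :
    PartitionTransfer mu2 mu1 := by
  have e : mu2.parts = 1 ::ₘ (s + 2) ::ₘ (Multiset.replicate k (s + 2) + {s + 1}) := by
    rw [h2, Multiset.replicate_succ]
    simp only [Multiset.insert_eq_cons, ← Multiset.singleton_add]
    abel
  refine ⟨1, ?_, s + 2, Or.inl ?_, ?_⟩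
  · rw [e]; exact Multiset.mem_cons_self _ _
  · rw [e, Multiset.erase_cons_head]; exact Multiset.mem_cons_self _ _
  · rw [e, Multiset.erase_cons_head, Multiset.erase_cons_head]
    simp only [show (1 : ℕ) - 1 = 0 from rfl, show s + 2 + 1 = s + 3 from rfl]
    rw [filter_pair_zero (Multiset.replicate k (s + 2) + {s + 1})
        (by
          intro c hc
          rw [Multiset.mem_add] at hc
          rcases hc with hc | hc
          · rw [Multiset.eq_of_mem_replicate hc]; omega
          · rw [Multiset.mem_singleton] at hc; omega)
        (s + 3) (by omega), h1]
    abel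

/-- A rectangular partition `(r^m)` with `r, m ≥ 2` has exactly two
neighbors in `G_{rm}`, namely `(r+1, r^{m-2}, r-1)` and `(r^{m-1}, r-1, 1)`, and these
two neighbors are adjacent to each other, so `(r^m)` lies in a triangle of `G_{rm}`. -/
theorem rectangle_neighbors (r m : ℕ) (hr : 2 ≤ r) (hm : 2 ≤ m)
    (lam mu1 mu2 : (r * m).Partition)
    (hl : lam.parts = Multiset.replicate m r)
    (h1 : mu1.parts = {r + 1} + Multiset.replicate (m - 2) r + {r - 1})
    (h2 : mu2.parts = Multiset.replicate (m - 1) r + {r - 1, 1}) :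
    (partitionGraph (r * m)).neighborSet lam = {mu1, mu2} ∧
    (partitionGraph (r * m)).Adj mu1 mu2 := by
  obtain ⟨s, rfl⟩ : ∃ s, r = s + 2 := ⟨r - 2, by omega⟩
  obtain ⟨k, rfl⟩ : ∃ k, m = k + 2 := ⟨m - 2, by omega⟩
  simp only [show s + 2 - 1 = s + 1 from rfl, show s + 2 + 1 = s + 3 from rfl,
    show k + 2 - 2 = k from rfl, show k + 2 - 1 = k + 1 from rfl] at h1 h2
  have hne1 : lam ≠ mu1 := by
    intro h
    have hmem : s + 3 ∈ Multiset.replicate (k + 2) (s + 2) := by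
      rw [← hl, h, h1]; simp
    have := Multiset.eq_of_mem_replicate hmem
    omega
  have hne2 : lam ≠ mu2 := by
    intro h
    have hmem : (1 : ℕ) ∈ Multiset.replicate (k + 2) (s + 2) := by
      rw [← hl, h, h2]; simp
    have := Multiset.eq_of_mem_replicate hmem
    omega
  have hne12 : mu1 ≠ mu2 := by
    intro h
    have hmem : s + 3 ∈ mu2.parts := by rw [← h, h1]; simp
    rw [h2] at hmem
    simp [Multiset.mem_replicate] at hmem
  refine ⟨?_, hne12, Or.inr (mu2_to_mu1 s k mu1 mu2 h1 h2)⟩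
  ext x
  simp only [SimpleGraph.mem_neighborSet, Set.mem_insert_iff, Set.mem_singleton_iff]
  constructor
  · rintro ⟨hne, ht | ht⟩
    · rcases transfer_from_rect s k lam x hl ht with h | h
      · exact Or.inl (Nat.Partition.ext (h.trans h1.symm))
      · exact Or.inr (Nat.Partition.ext (h.trans h2.symm))
    · rcases transfer_to_rect s k lam x hl ht with h | h
      · exact Or.inl (Nat.Partition.ext (h.trans h1.symm))
      · exact Or.inr (Nat.Partition.ext (h.trans h2.symm))
  · rintro (rfl | rfl)
    · exact ⟨hne1, Or.inl (rect_to_mu1 s k lam x hl h1)⟩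
    · exact ⟨hne2, Or.inl (rect_to_mu2 s k lam x hl h2)⟩
end
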